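/- Let S be an uncountable set and let X^s = βℕ for every s ∈ S. There exists a base point a = (a^s)_{s∈S} ∈ ∏_{s∈S} βℕ such that, for the Σ-product X_a = Σ_{s∈S} X^s(a), the following holds: whenever Z is a dense subspace of X_a (with the subspace topology), no point x ∈ Z is a W-point of Z. In particular, no point of X_a is a W-point of X_a. -/

import Mathlib

open Filter Set Topology

/-- `x` is a W-point: player I has a winning strategy in Gruenhage's game G(x), where
player I chooses open sets containing `x` and player II picks points in them; player I
wins when `x` is an accumulation point (cluster point) of the resulting sequence. -/
def IsWPoint {X : Type*} [TopologicalSpace X] (x : X) : Prop :=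
  ∃ σ : List X → Set X,
    (∀ h : List X, IsOpen (σ h) ∧ x ∈ σ h) ∧
    ∀ p : ℕ → X,
      (∀ n : ℕ, p n ∈ σ (List.ofFn fun i : Fin n => p i)) →
      MapClusterPt x atTop p

lemma stoneCech_singleton_open (k : ℕ) : IsOpen ({stoneCechUnit k} : Set (StoneCech ℕ)) := by
  classical
  have hf : Continuous (fun n : ℕ => (decide (n = k) : Bool)) := continuous_of_discreteTopology
  have hgu : ∀ n : ℕ, stoneCechExtend hf (stoneCechUnit n) = decide (n = k) := fun n =>
    congrFun (stoneCechExtend_extends hf) n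
  have hkey : ({stoneCechUnit k} : Set (StoneCech ℕ)) = stoneCechExtend hf ⁻¹' {true} := by
    apply Subset.antisymm
    · rintro z rfl
      simp [hgu]
    · intro z hz
      have hz' : z ∈ closure ({stoneCechUnit k} : Set (StoneCech ℕ)) := by
        rw [mem_closure_iff]
        intro o ho hzo
        have hoo : IsOpen (o ∩ stoneCechExtend hf ⁻¹' {true}) :=
          ho.inter ((isOpen_discrete _).preimage (continuous_stoneCechExtend hf))
        obtain ⟨n, hw⟩ :=
          denseRange_stoneCechUnit.exists_mem_open hoo ⟨z, hzo, hz⟩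
        have : (decide (n = k) : Bool) = true := by
          have := hw.2; simpa [hgu] using this
        have hnk : n = k := by simpa using this
        exact ⟨stoneCechUnit n, hw.1, by simp [hnk]⟩
      simpa using hz'
  rw [hkey]
  exact (isOpen_discrete _).preimage (continuous_stoneCechExtend hf)

lemma stoneCech_closure_disjoint {A B : Set ℕ} (hAB : ∀ n, n ∈ A → n ∉ B) {z : StoneCech ℕ}
    (hzA : z ∈ closure (stoneCechUnit '' A)) (hzB : z ∈ closure (stoneCechUnit '' B)) :
    False := by
  classical
  have hf : Continuous (fun n : ℕ => (decide (n ∈ A) : Bool)) := continuous_of_discreteTopology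
  have hgu : ∀ n : ℕ, stoneCechExtend hf (stoneCechUnit n) = decide (n ∈ A) := fun n =>
    congrFun (stoneCechExtend_extends hf) n
  have h1 : closure (stoneCechUnit '' A) ⊆ stoneCechExtend hf ⁻¹' {true} := by
    apply closure_minimal
    · rintro _ ⟨n, hn, rfl⟩
      simp [hgu, hn]
    · exact (isClosed_discrete _).preimage (continuous_stoneCechExtend hf)
  have h2 : closure (stoneCechUnit '' B) ⊆ stoneCechExtend hf ⁻¹' {false} := by
    apply closure_minimal
    · rintro _ ⟨n, hn, rfl⟩
      have : n ∉ A := fun h => hAB n h hn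
      simp [hgu, this]
    · exact (isClosed_discrete _).preimage (continuous_stoneCechExtend hf)
  have := h1 hzA
  have := h2 hzB
  simp_all

lemma IsWPoint.homeomorph {X Y : Type*} [TopologicalSpace X] [TopologicalSpace Y]
    (e : X ≃ₜ Y) {x : X} (h : IsWPoint x) : IsWPoint (e x) := by
  obtain ⟨σ, hσ, hwin⟩ := h
  refine ⟨fun h => e.symm ⁻¹' σ (h.map e.symm), fun h =>
    ⟨(hσ _).1.preimage e.symm.continuous, by simpa using (hσ _).2⟩, ?_⟩
  intro p hp
  have hq : ∀ n, (fun m => e.symm (p m)) n ∈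
      σ (List.ofFn fun i : Fin n => (fun m => e.symm (p m)) i) := by
    intro n
    have := hp n
    simpa [List.map_ofFn, Function.comp_def] using this
  have hc := hwin (fun m => e.symm (p m)) hq
  have hc2 := MapClusterPt.continuousAt_comp (e.continuous.continuousAt) hc
  have heq : (e ∘ fun m => e.symm (p m)) = p := funext fun n => e.apply_symm_apply _
  rwa [heq] at hc2

lemma core {S : Type*} [Uncountable S] (u : StoneCech ℕ)
    (hu : MapClusterPt u atTop stoneCechUnit)
    (Z : Set {x : S → StoneCech ℕ // {s : S | x s ≠ u}.Countable})
    (hZ : Dense Z) (x : Z) : ¬ IsWPoint x := by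
  classical
  rintro ⟨σ, hσ, hwin⟩
  -- a coordinate outside the support of x
  obtain ⟨s₀, hs₀⟩ : ∃ s₀, s₀ ∉ {s : S | (x : {x : S → StoneCech ℕ // {s : S | x s ≠ u}.Countable}).1 s ≠ u} := by
    by_contra hcon
    push_neg at hcon
    have : ({s : S | (x : {x : S → StoneCech ℕ // {s : S | x s ≠ u}.Countable}).1 s ≠ u}) = univ :=
      eq_univ_of_forall hcon
    have hcnt := (x : {x : S → StoneCech ℕ // {s : S | x s ≠ u}.Countable}).2
    rw [this, countable_univ_iff] at hcnt
    exact absurd hcnt (not_countable_iff.mpr inferInstance)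
  have hx0 : (x : {x : S → StoneCech ℕ // {s : S | x s ≠ u}.Countable}).1 s₀ = u := by
    simpa using hs₀
  -- the key selection step
  have STEP : ∀ (h : List Z) (b : ℕ), ∃ (p : Z) (k : ℕ),
      b < k ∧ p ∈ σ h ∧ ((p : {x : S → StoneCech ℕ // {s : S | x s ≠ u}.Countable}) : S → StoneCech ℕ) s₀ = stoneCechUnit k := by
    intro h b
    obtain ⟨hopen, hmem⟩ := hσ h
    rw [isOpen_induced_iff] at hopen
    obtain ⟨V, hV, hVeq⟩ := hopen
    rw [isOpen_induced_iff] at hV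
    obtain ⟨W, hW, hWeq⟩ := hV
    set X := (x : {x : S → StoneCech ℕ // {s : S | x s ≠ u}.Countable}).1 with hX
    have hxW : X ∈ W := by
      have := hmem
      rw [← hVeq, ← hWeq] at this
      exact this
    have he : Continuous fun v : StoneCech ℕ => Function.update X s₀ v := by
      apply continuous_pi
      intro s
      by_cases hs : s = s₀
      · subst hs
        simpa only [Function.update_self] using continuous_id'
      · simp only [Function.update_of_ne hs]
        exact continuous_const
    have heu : Function.update X s₀ u = X := by
      rw [← hx0]
      exact Function.update_eq_self _ _
    have hmemn : (fun v : StoneCech ℕ => Function.update X s₀ v) ⁻¹' W ∈ 𝓝 u :=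
      (hW.preimage he).mem_nhds (by simpa [heu] using hxW)
    have hfreq := (mapClusterPt_iff_frequently.mp hu) _ hmemn
    obtain ⟨k, hkW, hk⟩ := (hfreq.and_eventually (eventually_gt_atTop b)).exists
    set y := Function.update X s₀ (stoneCechUnit k) with hy
    have hyW : y ∈ W := hkW
    have hyc : {s : S | y s ≠ u}.Countable := by
      refine Countable.mono ?_ (((x : {x : S → StoneCech ℕ // {s : S | x s ≠ u}.Countable}).2).insert s₀)
      intro s hs
      rcases eq_or_ne s s₀ with rfl | h'
      · exact mem_insert _ _
      · apply mem_insert_of_mem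
        have : y s = X s := Function.update_of_ne h' _ _
        simpa [this] using hs
    have hO : IsOpen (W ∩ (fun g : S → StoneCech ℕ => g s₀) ⁻¹' {stoneCechUnit k}) :=
      hW.inter ((stoneCech_singleton_open k).preimage (continuous_apply s₀))
    have hYO : (⟨y, hyc⟩ : {x : S → StoneCech ℕ // {s : S | x s ≠ u}.Countable}).1 ∈
        W ∩ (fun g : S → StoneCech ℕ => g s₀) ⁻¹' {stoneCechUnit k} :=
      ⟨hyW, by simp [hy, Function.update_self]⟩
    obtain ⟨z, hzZ, hzO⟩ := hZ.exists_mem_open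
      ((hO.preimage continuous_subtype_val))
      ⟨⟨y, hyc⟩, hYO⟩
    refine ⟨⟨z, hzZ⟩, k, hk, ?_, ?_⟩
    · rw [← hVeq, ← hWeq]
      exact hzO.1
    · simpa using hzO.2
  choose pf kf hlt hmem hval using STEP
  -- interleaved construction of two plays
  set st : ℕ → List Z × List Z × ℕ := fun n =>
    Nat.rec (([], [], 0) : List Z × List Z × ℕ)
      (fun _ s =>
        (s.1 ++ [pf s.1 s.2.2],
         s.2.1 ++ [pf s.2.1 (kf s.1 s.2.2)],
         kf s.2.1 (kf s.1 s.2.2))) n with hstdef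
  set pA : ℕ → Z := fun n => pf (st n).1 (st n).2.2 with hpAdef
  set kA : ℕ → ℕ := fun n => kf (st n).1 (st n).2.2 with hkAdef
  set pB : ℕ → Z := fun n => pf (st n).2.1 (kA n) with hpBdef
  set kB : ℕ → ℕ := fun n => kf (st n).2.1 (kA n) with hkBdef
  have hst : ∀ n, st (n + 1) = ((st n).1 ++ [pA n], (st n).2.1 ++ [pB n], kB n) := fun n => rfl
  have hA1 : ∀ n, (st n).1 = List.ofFn (fun i : Fin n => pA i) := by
    intro n
    induction n with
    | zero => rfl
    | succ n ih =>
      rw [hst n, List.ofFn_succ']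
      simp only [List.concat_eq_append, Fin.coe_castSucc, Fin.val_last, ih]
  have hB1 : ∀ n, (st n).2.1 = List.ofFn (fun i : Fin n => pB i) := by
    intro n
    induction n with
    | zero => rfl
    | succ n ih =>
      rw [hst n, List.ofFn_succ']
      simp only [List.concat_eq_append, Fin.coe_castSucc, Fin.val_last, ih]
  have hwinA : MapClusterPt x atTop pA := by
    refine hwin pA fun n => ?_
    rw [← hA1 n]
    exact hmem _ _
  have hwinB : MapClusterPt x atTop pB := by
    refine hwin pB fun n => ?_
    rw [← hB1 n]
    exact hmem _ _
  -- the coordinate projection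
  have hπ : Continuous fun z : Z =>
      ((z : {x : S → StoneCech ℕ // {s : S | x s ≠ u}.Countable}) : S → StoneCech ℕ) s₀ :=
    (continuous_apply s₀).comp (continuous_subtype_val.comp continuous_subtype_val)
  have hcA : MapClusterPt u atTop (stoneCechUnit ∘ kA) := by
    have := MapClusterPt.continuousAt_comp hπ.continuousAt hwinA
    rw [hx0] at this
    have heq : ((fun z : Z =>
        ((z : {x : S → StoneCech ℕ // {s : S | x s ≠ u}.Countable}) : S → StoneCech ℕ) s₀) ∘ pA)
        = stoneCechUnit ∘ kA := funext fun n => hval _ _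
    rwa [heq] at this
  have hcB : MapClusterPt u atTop (stoneCechUnit ∘ kB) := by
    have := MapClusterPt.continuousAt_comp hπ.continuousAt hwinB
    rw [hx0] at this
    have heq : ((fun z : Z =>
        ((z : {x : S → StoneCech ℕ // {s : S | x s ≠ u}.Countable}) : S → StoneCech ℕ) s₀) ∘ pB)
        = stoneCechUnit ∘ kB := funext fun n => hval _ _
    rwa [heq] at this
  have hclA : u ∈ closure (stoneCechUnit '' range kA) := by
    rw [← range_comp]
    exact mem_closure_iff_clusterPt.mpr (hcA.clusterPt.mono (le_principal_iff.mpr range_mem_map))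
  have hclB : u ∈ closure (stoneCechUnit '' range kB) := by
    rw [← range_comp]
    exact mem_closure_iff_clusterPt.mpr (hcB.clusterPt.mono (le_principal_iff.mpr range_mem_map))
  -- disjointness of the two sets of indices
  have h1 : ∀ n, (st n).2.2 < kA n := fun n => hlt _ _
  have h2 : ∀ n, kA n < kB n := fun n => hlt _ _
  have hmono : StrictMono fun n => (st n).2.2 := by
    apply strictMono_nat_of_lt_succ
    intro n
    rw [hst n]
    exact lt_trans (h1 n) (h2 n)
  have hne : ∀ i j, kA i ≠ kB j := by
    intro i j
    rcases lt_trichotomy i j with hij | rfl | hij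
    · have e1 : (st (i + 1)).2.2 = kB i := rfl
      have h3 : kB i ≤ (st j).2.2 := by
        rw [← e1]; exact hmono.monotone (Nat.succ_le_of_lt hij)
      exact ne_of_lt ((h2 i).trans_le (h3.trans ((h1 j).trans (h2 j)).le))
    · exact ne_of_lt (h2 i)
    · have e1 : (st (j + 1)).2.2 = kB j := rfl
      have h3 : kB j ≤ (st i).2.2 := by
        rw [← e1]; exact hmono.monotone (Nat.succ_le_of_lt hij)
      exact ne_of_gt (h3.trans_lt (h1 i))
  refine stoneCech_closure_disjoint (A := range kA) (B := range kB) ?_ hclA hclB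
  rintro n ⟨i, rfl⟩ ⟨j, hj⟩
  exact hne i j hj.symm

/-- For an uncountable index set `S`, there is a base point `a` such that in the
Σ-product of copies of βℕ with base point `a`, no point of any dense subspace `Z` is a
W-point of `Z`; in particular no point of the Σ-product is a W-point. -/
theorem sigmaProduct_stoneCech_no_WPoints {S : Type*} [Uncountable S] :
    ∃ a : S → StoneCech ℕ,
      (∀ Z : Set {x : S → StoneCech ℕ // {s : S | x s ≠ a s}.Countable},
        Dense Z → ∀ x : Z, ¬ IsWPoint x) ∧
      ∀ x : {x : S → StoneCech ℕ // {s : S | x s ≠ a s}.Countable}, ¬ IsWPoint x := by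
  obtain ⟨u, hu⟩ : ∃ u, ClusterPt u (map (stoneCechUnit : ℕ → StoneCech ℕ) atTop) :=
    exists_clusterPt_of_compactSpace _
  have hu' : MapClusterPt u atTop (stoneCechUnit : ℕ → StoneCech ℕ) := hu
  refine ⟨fun _ => u, fun Z hZ x => core u hu' Z hZ x, fun x hx => ?_⟩
  have hx' := IsWPoint.homeomorph (Homeomorph.Set.univ _).symm hx
  exact core u hu' univ dense_univ _ hx'
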